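/- Let $p$ be a real polynomial on $\mathbb{C}$ of degree $D$, $c > 0$, and $\ell, m \ge 0$ integers. There exists $C$ (depending on $D, c, \ell, m$) and $c' \in (0, c)$ such that for all $s > 0$ and $z, \xi \in \mathbb{C}$: $e^{-c|z-\xi|^2/s}\,\Lambda(\xi, s^{1/2}) \le C\, e^{-c'|z-\xi|^2/s}\,\Lambda(z, s^{1/2})$, where $\Lambda(z,\delta) = \sum_{j,k\ge 1}|A_{jk}(z)|\delta^{j+k}$ and $A_{jk}(z) = \frac{1}{j!k!}\frac{\partial^{j+k}p(z)}{\partial z^j\partial\bar z^k}$. -/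

import Mathlib

open Finset

/-- The Wirtinger derivative `∂/∂z` of a function `f : ℂ → ℂ`. -/
noncomputable def WD (f : ℂ → ℂ) : ℂ → ℂ :=
  fun z => (fderiv ℝ f z 1 - Complex.I * fderiv ℝ f z Complex.I) / 2

/-- The Wirtinger derivative `∂/∂z̄` of a function `f : ℂ → ℂ`. -/
noncomputable def WDbar (f : ℂ → ℂ) : ℂ → ℂ :=
  fun z => (fderiv ℝ f z 1 + Complex.I * fderiv ℝ f z Complex.I) / 2

/-- The normalized mixed Taylor coefficient
`A_{jk}(z) = (1/(j! k!)) ∂^{j+k} p(z) / ∂z^j ∂z̄^k`. -/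
noncomputable def Acoef (p : ℂ → ℂ) (j k : ℕ) (z : ℂ) : ℂ :=
  (1 / ((Nat.factorial j : ℂ) * (Nat.factorial k : ℂ))) * (WD^[j] (WDbar^[k] p)) z

/-- `p` is a polynomial in `z` and `z̄` of degree at most `D` in each variable. -/
def IsCCPoly (p : ℂ → ℂ) (D : ℕ) : Prop :=
  ∃ a : ℕ → ℕ → ℂ, ∀ z : ℂ,
    p z = ∑ j ∈ range (D + 1), ∑ k ∈ range (D + 1), a j k * z ^ j * (starRingEnd ℂ z) ^ k

/-- `p` takes real values. -/
def IsRealValued (p : ℂ → ℂ) : Prop := ∀ z, (p z).im = 0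

/-- The twist term `T(w,z) = -2 Im ∑_{j≥1} (1/j!) ∂^j p(z)/∂z^j (w-z)^j`. -/
noncomputable def Ttwist (p : ℂ → ℂ) (D : ℕ) (w z : ℂ) : ℝ :=
  -2 * (∑ j ∈ Finset.Icc 1 D, Acoef p j 0 z * (w - z) ^ j).im

/-- `r(w,ξ,z) = 2 Im ∑_{j,k≥1} A_{jk}(ξ) (w-ξ)^j conj(z-ξ)^k`. -/
noncomputable def rtwist (p : ℂ → ℂ) (D : ℕ) (w ξ z : ℂ) : ℝ :=
  2 * (∑ j ∈ Finset.Icc 1 D, ∑ k ∈ Finset.Icc 1 D,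
    Acoef p j k ξ * (w - ξ) ^ j * (starRingEnd ℂ (z - ξ)) ^ k).im

/-- `e(w,ξ) = ∑_{j≥1} (1/j!) ∂^{j+1} p(ξ)/∂ξ^j ∂ξ̄ (w-ξ)^j`. -/
noncomputable def efun (p : ℂ → ℂ) (D : ℕ) (w ξ : ℂ) : ℂ :=
  ∑ j ∈ Finset.Icc 1 D, Acoef p j 1 ξ * (w - ξ) ^ j

/-- `Λ(z,δ) = ∑_{j,k ≥ 1} |A_{jk}(z)| δ^{j+k}`. -/
noncomputable def Lam (p : ℂ → ℂ) (D : ℕ) (z : ℂ) (δ : ℝ) : ℝ :=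
  ∑ j ∈ Finset.Icc 1 D, ∑ k ∈ Finset.Icc 1 D, ‖Acoef p j k z‖ * δ ^ (j + k)

/-- The weighted operator `Z_{τp} = ∂/∂z - τ (∂p/∂z)`. -/
noncomputable def Zop (p : ℂ → ℂ) (τ : ℝ) (f : ℂ → ℂ) : ℂ → ℂ :=
  fun z => WD f z - (τ : ℂ) * WD p z * f z

/-- The weighted operator `Z̄_{τp} = ∂/∂z̄ + τ (∂p/∂z̄)`. -/
noncomputable def Zbarop (p : ℂ → ℂ) (τ : ℝ) (f : ℂ → ℂ) : ℂ → ℂ :=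
  fun z => WDbar f z + (τ : ℂ) * WDbar p z * f z

/-- The weighted Laplacian `□_{τp} = -Z̄_{τp} Z_{τp}`. -/
noncomputable def BoxOp (p : ℂ → ℂ) (τ : ℝ) (f : ℂ → ℂ) : ℂ → ℂ :=
  fun z => -(Zbarop p τ (Zop p τ f) z)

/-- The twisted `τ`-derivative `M_{τp} = ∂/∂τ - i T(w,z)`, acting on functions of `(τ,z)`. -/
noncomputable def Mop (p : ℂ → ℂ) (D : ℕ) (w : ℂ) (F : ℝ → ℂ → ℂ) : ℝ → ℂ → ℂ :=
  fun τ z => deriv (fun σ => F σ z) τ - Complex.I * (Ttwist p D w z : ℂ) * F τ z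

lemma hasFDerivAt_mono (a b : ℕ) (z : ℂ) :
    HasFDerivAt (fun w : ℂ => w ^ a * (starRingEnd ℂ w) ^ b)
      ((z ^ a) • ((((ContinuousLinearMap.smulRight (1 : ℂ →L[ℂ] ℂ)
          ((b : ℂ) * (starRingEnd ℂ z) ^ (b - 1))).restrictScalars ℝ).comp
          (Complex.conjCLE.toContinuousLinearMap)) )
       + ((starRingEnd ℂ z) ^ b) • ((ContinuousLinearMap.smulRight (1 : ℂ →L[ℂ] ℂ)
          ((a : ℂ) * z ^ (a - 1))).restrictScalars ℝ)) z := by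
  have h1 : HasFDerivAt (fun w : ℂ => w ^ a)
      ((ContinuousLinearMap.smulRight (1 : ℂ →L[ℂ] ℂ) ((a : ℂ) * z ^ (a - 1))).restrictScalars ℝ) z :=
    (hasDerivAt_pow a z).hasFDerivAt.restrictScalars ℝ
  have hc : HasFDerivAt (fun w : ℂ => starRingEnd ℂ w)
      (Complex.conjCLE.toContinuousLinearMap) z :=
    Complex.conjCLE.toContinuousLinearMap.hasFDerivAt
  have h2 : HasFDerivAt (fun w : ℂ => (starRingEnd ℂ w) ^ b)
      ((((ContinuousLinearMap.smulRight (1 : ℂ →L[ℂ] ℂ)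
          ((b : ℂ) * (starRingEnd ℂ z) ^ (b - 1))).restrictScalars ℝ).comp
          (Complex.conjCLE.toContinuousLinearMap))) z := by
    exact ((hasDerivAt_pow b (starRingEnd ℂ z)).hasFDerivAt.restrictScalars ℝ).comp z hc
  exact h1.mul h2

lemma WD_mono (a b : ℕ) (z : ℂ) :
    WD (fun w : ℂ => w ^ a * (starRingEnd ℂ w) ^ b) z
      = (a : ℂ) * z ^ (a - 1) * (starRingEnd ℂ z) ^ b := by
  have h := hasFDerivAt_mono a b z
  rw [WD, h.fderiv]
  simp [ContinuousLinearMap.smul_apply, Complex.ext_iff]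
  ring_nf
  simp [Complex.ext_iff]

lemma WDbar_mono (a b : ℕ) (z : ℂ) :
    WDbar (fun w : ℂ => w ^ a * (starRingEnd ℂ w) ^ b) z
      = (b : ℂ) * z ^ a * (starRingEnd ℂ z) ^ (b - 1) := by
  have h := hasFDerivAt_mono a b z
  rw [WDbar, h.fderiv]
  simp [ContinuousLinearMap.smul_apply, Complex.ext_iff]
  ring_nf
  simp [Complex.ext_iff]
variable {ι : Type*} {z : ℂ}

lemma WD_sum (s : Finset ι) (g : ι → ℂ → ℂ) (h : ∀ i ∈ s, DifferentiableAt ℝ (g i) z) :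
    WD (fun w => ∑ i ∈ s, g i w) z = ∑ i ∈ s, WD (g i) z := by
  simp only [WD, fderiv_fun_sum h, ContinuousLinearMap.sum_apply, Finset.mul_sum,
    ← Finset.sum_sub_distrib, Finset.sum_div]

lemma WDbar_sum (s : Finset ι) (g : ι → ℂ → ℂ) (h : ∀ i ∈ s, DifferentiableAt ℝ (g i) z) :
    WDbar (fun w => ∑ i ∈ s, g i w) z = ∑ i ∈ s, WDbar (g i) z := by
  simp only [WDbar, fderiv_fun_sum h, ContinuousLinearMap.sum_apply, Finset.mul_sum,
    ← Finset.sum_add_distrib, Finset.sum_div]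

lemma WD_const_mul (c : ℂ) (f : ℂ → ℂ) (h : DifferentiableAt ℝ f z) :
    WD (fun w => c * f w) z = c * WD f z := by
  simp only [WD, fderiv_const_mul h c, ContinuousLinearMap.smul_apply, smul_eq_mul]
  ring

lemma WDbar_const_mul (c : ℂ) (f : ℂ → ℂ) (h : DifferentiableAt ℝ f z) :
    WDbar (fun w => c * f w) z = c * WDbar f z := by
  simp only [WDbar, fderiv_const_mul h c, ContinuousLinearMap.smul_apply, smul_eq_mul]
  ring

lemma diff_mono (a b : ℕ) (z : ℂ) :
    DifferentiableAt ℝ (fun w : ℂ => w ^ a * (starRingEnd ℂ w) ^ b) z :=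
  (hasFDerivAt_mono a b z).differentiableAt

/-- polynomial template -/
noncomputable def Qp (N : ℕ) (cc : ℕ → ℕ → ℂ) (e f : ℕ → ℕ) : ℂ → ℂ :=
  fun w => ∑ α ∈ range N, ∑ β ∈ range N, cc α β * w ^ (e α) * (starRingEnd ℂ w) ^ (f β)

lemma diff_Qp_inner (N : ℕ) (cc : ℕ → ℕ → ℂ) (e f : ℕ → ℕ) (α : ℕ) (z : ℂ) :
    DifferentiableAt ℝ (fun w => ∑ β ∈ range N, cc α β * w ^ (e α) * (starRingEnd ℂ w) ^ (f β)) z := by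
  apply DifferentiableAt.fun_sum
  intro β _
  have : (fun w : ℂ => cc α β * w ^ (e α) * (starRingEnd ℂ w) ^ (f β))
      = fun w : ℂ => cc α β * (w ^ (e α) * (starRingEnd ℂ w) ^ (f β)) := by
    funext w; ring
  rw [this]
  exact (diff_mono (e α) (f β) z).const_mul _

lemma WD_Qp (N : ℕ) (cc : ℕ → ℕ → ℂ) (e f : ℕ → ℕ) (z : ℂ) :
    WD (Qp N cc e f) z
      = ∑ α ∈ range N, ∑ β ∈ range N,
          cc α β * (e α : ℂ) * z ^ (e α - 1) * (starRingEnd ℂ z) ^ (f β) := by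
  rw [show Qp N cc e f = fun w => ∑ α ∈ range N,
      (fun α w => ∑ β ∈ range N, cc α β * w ^ (e α) * (starRingEnd ℂ w) ^ (f β)) α w from rfl]
  rw [WD_sum (range N) _ (fun α _ => diff_Qp_inner N cc e f α z)]
  refine Finset.sum_congr rfl fun α _ => ?_
  rw [WD_sum (range N) _ (fun β _ => by
    have : (fun w : ℂ => cc α β * w ^ (e α) * (starRingEnd ℂ w) ^ (f β))
        = fun w : ℂ => cc α β * (w ^ (e α) * (starRingEnd ℂ w) ^ (f β)) := by
      funext w; ring
    rw [this]; exact (diff_mono (e α) (f β) z).const_mul _)]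
  refine Finset.sum_congr rfl fun β _ => ?_
  have h : (fun w : ℂ => cc α β * w ^ (e α) * (starRingEnd ℂ w) ^ (f β))
      = fun w : ℂ => cc α β * (w ^ (e α) * (starRingEnd ℂ w) ^ (f β)) := by
    funext w; ring
  rw [h, WD_const_mul _ _ (diff_mono (e α) (f β) z), WD_mono]
  ring

lemma WDbar_Qp (N : ℕ) (cc : ℕ → ℕ → ℂ) (e f : ℕ → ℕ) (z : ℂ) :
    WDbar (Qp N cc e f) z
      = ∑ α ∈ range N, ∑ β ∈ range N,
          cc α β * (f β : ℂ) * z ^ (e α) * (starRingEnd ℂ z) ^ (f β - 1) := by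
  rw [show Qp N cc e f = fun w => ∑ α ∈ range N,
      (fun α w => ∑ β ∈ range N, cc α β * w ^ (e α) * (starRingEnd ℂ w) ^ (f β)) α w from rfl]
  rw [WDbar_sum (range N) _ (fun α _ => diff_Qp_inner N cc e f α z)]
  refine Finset.sum_congr rfl fun α _ => ?_
  rw [WDbar_sum (range N) _ (fun β _ => by
    have : (fun w : ℂ => cc α β * w ^ (e α) * (starRingEnd ℂ w) ^ (f β))
        = fun w : ℂ => cc α β * (w ^ (e α) * (starRingEnd ℂ w) ^ (f β)) := by
      funext w; ring
    rw [this]; exact (diff_mono (e α) (f β) z).const_mul _)]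
  refine Finset.sum_congr rfl fun β _ => ?_
  have h : (fun w : ℂ => cc α β * w ^ (e α) * (starRingEnd ℂ w) ^ (f β))
      = fun w : ℂ => cc α β * (w ^ (e α) * (starRingEnd ℂ w) ^ (f β)) := by
    funext w; ring
  rw [h, WDbar_const_mul _ _ (diff_mono (e α) (f β) z), WDbar_mono]
  ring

lemma WDbar_iter_Qp (N : ℕ) (a : ℕ → ℕ → ℂ) (k : ℕ) :
    WDbar^[k] (Qp N a id id)
      = Qp N (fun α β => a α β * (β.descFactorial k : ℂ)) id (fun β => β - k) := by
  induction k with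
  | zero => simp only [Function.iterate_zero, id_eq, Nat.descFactorial_zero, Nat.cast_one,
      mul_one, Nat.sub_zero]; rfl
  | succ k ih =>
      rw [Function.iterate_succ_apply', ih]
      funext z
      rw [WDbar_Qp]
      refine Finset.sum_congr rfl fun α _ => Finset.sum_congr rfl fun β _ => ?_
      simp only [Qp, id]
      rw [Nat.descFactorial_succ, Nat.sub_sub]
      push_cast
      ring

lemma WD_iter_Qp (N : ℕ) (a : ℕ → ℕ → ℂ) (j k : ℕ) :
    WD^[j] (WDbar^[k] (Qp N a id id))
      = Qp N (fun α β => a α β * (α.descFactorial j : ℂ) * (β.descFactorial k : ℂ))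
          (fun α => α - j) (fun β => β - k) := by
  rw [WDbar_iter_Qp]
  induction j with
  | zero => simp [Qp]; rfl
  | succ j ih =>
      rw [Function.iterate_succ_apply', ih]
      funext z
      rw [WD_Qp]
      refine Finset.sum_congr rfl fun α _ => Finset.sum_congr rfl fun β _ => ?_
      simp only [Qp]
      rw [Nat.descFactorial_succ, Nat.sub_sub]
      push_cast
      ring

lemma Acoef_formula (p : ℂ → ℂ) (D : ℕ) (a : ℕ → ℕ → ℂ)
    (hp : ∀ z : ℂ, p z = ∑ j ∈ range (D + 1), ∑ k ∈ range (D + 1),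
      a j k * z ^ j * (starRingEnd ℂ z) ^ k) (j k : ℕ) (z : ℂ) :
    Acoef p j k z = ∑ α ∈ range (D + 1), ∑ β ∈ range (D + 1),
      a α β * (α.choose j : ℂ) * (β.choose k : ℂ) * z ^ (α - j) * (starRingEnd ℂ z) ^ (β - k) := by
  have hpq : p = Qp (D + 1) a id id := by funext w; exact hp w
  rw [Acoef, hpq, WD_iter_Qp]
  rw [Qp, Finset.mul_sum]
  refine Finset.sum_congr rfl fun α _ => ?_
  rw [Finset.mul_sum]
  refine Finset.sum_congr rfl fun β _ => ?_
  rw [Nat.descFactorial_eq_factorial_mul_choose, Nat.descFactorial_eq_factorial_mul_choose]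
  have hj : ((Nat.factorial j : ℂ)) ≠ 0 := Nat.cast_ne_zero.2 (Nat.factorial_ne_zero j)
  have hk : ((Nat.factorial k : ℂ)) ≠ 0 := Nat.cast_ne_zero.2 (Nat.factorial_ne_zero k)
  push_cast
  field_simp

lemma binom_expand (D j α : ℕ) (hα : α ≤ D) (z h : ℂ) :
    (α.choose j : ℂ) * (z + h) ^ (α - j)
      = ∑ α' ∈ range (D + 1),
          (α'.choose j : ℂ) * (α.choose α' : ℂ) * h ^ (α' - j) * z ^ (α - α') := by
  by_cases hj : j ≤ α
  · have step1 : ∑ α' ∈ range (D + 1),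
        (α'.choose j : ℂ) * (α.choose α' : ℂ) * h ^ (α' - j) * z ^ (α - α')
        = ∑ α' ∈ range (α + 1),
          (α'.choose j : ℂ) * (α.choose α' : ℂ) * h ^ (α' - j) * z ^ (α - α') := by
      refine (Finset.sum_subset (by
        intro x hx; simp only [Finset.mem_range] at *; omega) ?_).symm
      intro x hx hx'
      simp only [Finset.mem_range] at hx hx'
      have : α < x := by omega
      simp [Nat.choose_eq_zero_of_lt this]
    have hsplit : α + 1 = j + (α - j + 1) := by omega
    rw [step1, hsplit, Finset.sum_range_add]
    have hzero : ∑ α' ∈ range j,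
        (α'.choose j : ℂ) * (α.choose α' : ℂ) * h ^ (α' - j) * z ^ (α - α') = 0 := by
      refine Finset.sum_eq_zero fun x hx => ?_
      simp only [Finset.mem_range] at hx
      simp [Nat.choose_eq_zero_of_lt hx]
    rw [hzero, zero_add]
    have hcomm : z + h = h + z := add_comm z h
    rw [hcomm, add_pow, Finset.mul_sum]
    refine Finset.sum_congr rfl fun ν hν => ?_
    simp only [Finset.mem_range] at hν
    have hν' : ν ≤ α - j := by omega
    have key : α.choose (j + ν) * (j + ν).choose j = α.choose j * (α - j).choose ν := by
      have := Nat.choose_mul (n := α) (k := j + ν) (s := j) (by omega)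
      simpa using this
    have hkey : ((α.choose (j + ν) : ℂ)) * ((j + ν).choose j : ℂ)
        = (α.choose j : ℂ) * ((α - j).choose ν : ℂ) := by
      exact_mod_cast congrArg (Nat.cast (R := ℂ)) key
    have he1 : j + ν - j = ν := by omega
    have he2 : α - (j + ν) = α - j - ν := by omega
    rw [he1, he2]
    calc (α.choose j : ℂ) * (h ^ ν * z ^ (α - j - ν) * ((α - j).choose ν : ℂ))
        = ((α.choose j : ℂ) * ((α - j).choose ν : ℂ)) * h ^ ν * z ^ (α - j - ν) := by ring
      _ = ((α.choose (j + ν) : ℂ)) * ((j + ν).choose j : ℂ) * h ^ ν * z ^ (α - j - ν) := by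
          rw [hkey]
      _ = ((j + ν).choose j : ℂ) * (α.choose (j + ν) : ℂ) * h ^ ν * z ^ (α - j - ν) := by ring
  · push_neg at hj
    rw [Nat.choose_eq_zero_of_lt hj]
    rw [Nat.cast_zero, zero_mul]
    refine (Finset.sum_eq_zero fun x hx => ?_).symm
    by_cases hxj : x < j
    · simp [Nat.choose_eq_zero_of_lt hxj]
    · have : α < x := by omega
      simp [Nat.choose_eq_zero_of_lt this]

lemma sum4_swap {M : Type*} [AddCommMonoid M] (s t u v : Finset ℕ) (f : ℕ → ℕ → ℕ → ℕ → M) :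
    ∑ a ∈ s, ∑ b ∈ t, ∑ c ∈ u, ∑ d ∈ v, f a b c d
      = ∑ c ∈ u, ∑ d ∈ v, ∑ a ∈ s, ∑ b ∈ t, f a b c d :=
  calc ∑ a ∈ s, ∑ b ∈ t, ∑ c ∈ u, ∑ d ∈ v, f a b c d
      = ∑ a ∈ s, ∑ c ∈ u, ∑ b ∈ t, ∑ d ∈ v, f a b c d :=
        Finset.sum_congr rfl fun a _ => Finset.sum_comm
    _ = ∑ c ∈ u, ∑ a ∈ s, ∑ b ∈ t, ∑ d ∈ v, f a b c d := Finset.sum_comm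
    _ = ∑ c ∈ u, ∑ a ∈ s, ∑ d ∈ v, ∑ b ∈ t, f a b c d :=
        Finset.sum_congr rfl fun c _ => Finset.sum_congr rfl fun a _ => Finset.sum_comm
    _ = ∑ c ∈ u, ∑ d ∈ v, ∑ a ∈ s, ∑ b ∈ t, f a b c d :=
        Finset.sum_congr rfl fun c _ => Finset.sum_comm

lemma Acoef_shift (p : ℂ → ℂ) (D : ℕ) (a : ℕ → ℕ → ℂ)
    (hp : ∀ w : ℂ, p w = ∑ j ∈ range (D + 1), ∑ k ∈ range (D + 1),
      a j k * w ^ j * (starRingEnd ℂ w) ^ k) (j k : ℕ) (z ξ : ℂ) :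
    Acoef p j k ξ
      = ∑ α' ∈ range (D + 1), ∑ β' ∈ range (D + 1),
          (α'.choose j : ℂ) * (β'.choose k : ℂ) * Acoef p α' β' z
            * (ξ - z) ^ (α' - j) * (starRingEnd ℂ (ξ - z)) ^ (β' - k) := by
  set h : ℂ := ξ - z with hh
  have hξ : ξ = z + h := by rw [hh]; ring
  have hconj : (starRingEnd ℂ) ξ = (starRingEnd ℂ) z + (starRingEnd ℂ) h := by
    rw [hξ, map_add]
  set T : ℕ → ℕ → ℕ → ℕ → ℂ := fun α β α' β' =>
    a α β * (((α'.choose j : ℂ) * (α.choose α' : ℂ) * h ^ (α' - j) * z ^ (α - α'))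
      * ((β'.choose k : ℂ) * (β.choose β' : ℂ) * (starRingEnd ℂ h) ^ (β' - k)
          * (starRingEnd ℂ z) ^ (β - β'))) with hT
  have L : Acoef p j k ξ
      = ∑ α ∈ range (D + 1), ∑ β ∈ range (D + 1), ∑ α' ∈ range (D + 1), ∑ β' ∈ range (D + 1),
          T α β α' β' := by
    rw [Acoef_formula p D a hp j k ξ]
    refine Finset.sum_congr rfl fun α hα => Finset.sum_congr rfl fun β hβ => ?_
    rw [Finset.mem_range] at hα hβ
    have e1 := binom_expand D j α (by omega) z h
    have e2 := binom_expand D k β (by omega) (starRingEnd ℂ z) (starRingEnd ℂ h)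
    calc a α β * (α.choose j : ℂ) * (β.choose k : ℂ) * ξ ^ (α - j) * (starRingEnd ℂ ξ) ^ (β - k)
        = a α β * (((α.choose j : ℂ) * (z + h) ^ (α - j))
            * ((β.choose k : ℂ) * ((starRingEnd ℂ z) + (starRingEnd ℂ h)) ^ (β - k))) := by
          rw [hξ, map_add]; ring
      _ = a α β * ((∑ α' ∈ range (D + 1),
              (α'.choose j : ℂ) * (α.choose α' : ℂ) * h ^ (α' - j) * z ^ (α - α'))
            * (∑ β' ∈ range (D + 1),
              (β'.choose k : ℂ) * (β.choose β' : ℂ) * (starRingEnd ℂ h) ^ (β' - k)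
                * (starRingEnd ℂ z) ^ (β - β'))) := by rw [e1, e2]
      _ = ∑ α' ∈ range (D + 1), ∑ β' ∈ range (D + 1), T α β α' β' := by
          rw [Finset.sum_mul_sum, Finset.mul_sum]
          refine Finset.sum_congr rfl fun α' _ => ?_
          rw [Finset.mul_sum]
  have R : ∑ α' ∈ range (D + 1), ∑ β' ∈ range (D + 1),
        (α'.choose j : ℂ) * (β'.choose k : ℂ) * Acoef p α' β' z
          * (ξ - z) ^ (α' - j) * (starRingEnd ℂ (ξ - z)) ^ (β' - k)
      = ∑ α' ∈ range (D + 1), ∑ β' ∈ range (D + 1), ∑ α ∈ range (D + 1), ∑ β ∈ range (D + 1),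
          T α β α' β' := by
    refine Finset.sum_congr rfl fun α' _ => Finset.sum_congr rfl fun β' _ => ?_
    rw [Acoef_formula p D a hp α' β' z]
    rw [← hh]
    simp only [Finset.mul_sum, Finset.sum_mul]
    refine Finset.sum_congr rfl fun α _ => Finset.sum_congr rfl fun β _ => ?_
    rw [hT]
    ring
  rw [L, R, sum4_swap]

lemma Acoef_abs_bound (p : ℂ → ℂ) (D : ℕ) (a : ℕ → ℕ → ℂ)
    (hp : ∀ w : ℂ, p w = ∑ j ∈ range (D + 1), ∑ k ∈ range (D + 1),
      a j k * w ^ j * (starRingEnd ℂ w) ^ k) (j k : ℕ) (z ξ : ℂ) :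
    ‖Acoef p j k ξ‖
      ≤ ∑ α' ∈ Finset.Icc j D, ∑ β' ∈ Finset.Icc k D,
          (α'.choose j : ℝ) * (β'.choose k : ℝ) * ‖Acoef p α' β' z‖
            * ‖ξ - z‖ ^ (α' - j) * ‖ξ - z‖ ^ (β' - k) := by
  rw [Acoef_shift p D a hp j k z ξ]
  have tri : ‖∑ α' ∈ range (D + 1), ∑ β' ∈ range (D + 1),
      (α'.choose j : ℂ) * (β'.choose k : ℂ) * Acoef p α' β' z
        * (ξ - z) ^ (α' - j) * (starRingEnd ℂ (ξ - z)) ^ (β' - k)‖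
      ≤ ∑ α' ∈ range (D + 1), ∑ β' ∈ range (D + 1),
          (α'.choose j : ℝ) * (β'.choose k : ℝ) * ‖Acoef p α' β' z‖
            * ‖ξ - z‖ ^ (α' - j) * ‖ξ - z‖ ^ (β' - k) := by
    refine (norm_sum_le _ _).trans ?_
    refine Finset.sum_le_sum fun α' _ => ?_
    refine (norm_sum_le _ _).trans ?_
    refine Finset.sum_le_sum fun β' _ => ?_
    rw [norm_mul, norm_mul, norm_mul, norm_mul, norm_pow, norm_pow]
    simp [← map_sub, Complex.norm_conj]
  refine tri.trans (le_of_eq ?_)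
  -- restrict the sums to the Icc's
  rw [← Finset.sum_subset (fun x hx => by rw [Finset.mem_Icc] at hx; rw [Finset.mem_range]; omega : Finset.Icc j D ⊆ range (D+1)) ?h1]
  · refine Finset.sum_congr rfl fun α' _ => ?_
    rw [← Finset.sum_subset (fun x hx => by rw [Finset.mem_Icc] at hx; rw [Finset.mem_range]; omega : Finset.Icc k D ⊆ range (D+1)) ?h2]
    intro x hx hx'
    rw [Finset.mem_range] at hx
    rw [Finset.mem_Icc] at hx'
    have : x < k := by omega
    simp [Nat.choose_eq_zero_of_lt this]
  · intro x hx hx'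
    rw [Finset.mem_range] at hx
    rw [Finset.mem_Icc] at hx'
    have : x < j := by omega
    refine Finset.sum_eq_zero fun β' _ => by simp [Nat.choose_eq_zero_of_lt this]

lemma pow_exp_bound (D : ℕ) (c : ℝ) (hc : 0 < c) (u : ℝ) (hu : 0 ≤ u) (r : ℕ) (hr : r ≤ 2 * D) :
    u ^ r * Real.exp (-(c * u ^ 2))
      ≤ (1 + (D.factorial : ℝ) * (2 / c) ^ D) * Real.exp (-(c / 2 * u ^ 2)) := by
  have hx : (0 : ℝ) ≤ c / 2 * u ^ 2 := by positivity
  have key : u ^ r ≤ (1 + (D.factorial : ℝ) * (2 / c) ^ D) * Real.exp (c / 2 * u ^ 2) := by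
    rcases le_total u 1 with h1 | h1
    · have : u ^ r ≤ 1 := pow_le_one₀ hu h1
      refine this.trans ?_
      have h2 : (1 : ℝ) ≤ Real.exp (c / 2 * u ^ 2) := Real.one_le_exp hx
      have h3 : (0:ℝ) ≤ (D.factorial : ℝ) * (2 / c) ^ D := by positivity
      nlinarith [h2, h3]
    · have h2 : u ^ r ≤ u ^ (2 * D) := pow_le_pow_right₀ h1 hr
      have h3 : u ^ (2 * D) = (u ^ 2) ^ D := by rw [pow_mul]
      have h4 : (u ^ 2) ^ D = (2 / c) ^ D * (c / 2 * u ^ 2) ^ D := by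
        rw [← mul_pow]
        congr 1
        field_simp
      have h5 : (c / 2 * u ^ 2) ^ D ≤ (D.factorial : ℝ) * Real.exp (c / 2 * u ^ 2) := by
        have := Real.pow_div_factorial_le_exp (c / 2 * u ^ 2) hx D
        have hD : (0 : ℝ) < (D.factorial : ℝ) := Nat.cast_pos.2 D.factorial_pos
        calc (c / 2 * u ^ 2) ^ D = (c / 2 * u ^ 2) ^ D / (D.factorial : ℝ) * (D.factorial : ℝ) := by
              field_simp
          _ ≤ Real.exp (c / 2 * u ^ 2) * (D.factorial : ℝ) := by
              apply mul_le_mul_of_nonneg_right this hD.le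
          _ = (D.factorial : ℝ) * Real.exp (c / 2 * u ^ 2) := by ring
      have h6 : (0 : ℝ) ≤ (2 / c) ^ D := by positivity
      calc u ^ r ≤ (u ^ 2) ^ D := by rw [← h3]; exact h2
        _ = (2 / c) ^ D * (c / 2 * u ^ 2) ^ D := h4
        _ ≤ (2 / c) ^ D * ((D.factorial : ℝ) * Real.exp (c / 2 * u ^ 2)) :=
            mul_le_mul_of_nonneg_left h5 h6
        _ ≤ (1 + (D.factorial : ℝ) * (2 / c) ^ D) * Real.exp (c / 2 * u ^ 2) := by
            nlinarith [Real.exp_pos (c / 2 * u ^ 2)]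
  have hsplit : Real.exp (-(c * u ^ 2))
      = Real.exp (-(c / 2 * u ^ 2)) * Real.exp (-(c / 2 * u ^ 2)) := by
    rw [← Real.exp_add]; ring_nf
  have h7 : u ^ r * Real.exp (-(c / 2 * u ^ 2)) ≤ 1 + (D.factorial : ℝ) * (2 / c) ^ D := by
    have h := mul_le_mul_of_nonneg_right key (Real.exp_pos (-(c / 2 * u ^ 2))).le
    calc u ^ r * Real.exp (-(c / 2 * u ^ 2))
        ≤ (1 + (D.factorial : ℝ) * (2 / c) ^ D) * Real.exp (c / 2 * u ^ 2)
            * Real.exp (-(c / 2 * u ^ 2)) := h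
      _ = 1 + (D.factorial : ℝ) * (2 / c) ^ D := by rw [mul_assoc, ← Real.exp_add]; simp
  calc u ^ r * Real.exp (-(c * u ^ 2))
      = (u ^ r * Real.exp (-(c / 2 * u ^ 2))) * Real.exp (-(c / 2 * u ^ 2)) := by
        rw [hsplit]; ring
    _ ≤ (1 + (D.factorial : ℝ) * (2 / c) ^ D) * Real.exp (-(c / 2 * u ^ 2)) :=
        mul_le_mul_of_nonneg_right h7 (Real.exp_pos _).le

theorem Lam_replacement_aux (D : ℕ) (c : ℝ) (hc : 0 < c) :
    ∃ C : ℝ, 0 < C ∧ ∃ c' : ℝ, 0 < c' ∧ c' < c ∧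
      ∀ p : ℂ → ℂ, IsCCPoly p D →
        ∀ s : ℝ, 0 < s → ∀ z ξ : ℂ,
          Real.exp (-c * ‖z - ξ‖ ^ 2 / s) * Lam p D ξ (Real.sqrt s) ≤
            C * (Real.exp (-c' * ‖z - ξ‖ ^ 2 / s) * Lam p D z (Real.sqrt s)) := by
  set K0 : ℝ := 1 + (D.factorial : ℝ) * (2 / c) ^ D with hK0
  have hK0pos : 0 < K0 := by positivity
  set B : ℝ := ((D + 1 : ℕ) : ℝ) ^ (D + 1) with hB
  have hBpos : 0 < B := by positivity
  refine ⟨(D : ℝ) ^ 2 * B ^ 2 * K0 + 1, by positivity, c / 2, by positivity, by linarith, ?_⟩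
  rintro p ⟨a, hp⟩ s hs z ξ
  set δ : ℝ := Real.sqrt s with hδdef
  have hδ : 0 < δ := Real.sqrt_pos.2 hs
  set u : ℝ := ‖ξ - z‖ / δ with hudef
  have hu : 0 ≤ u := by positivity
  have habs : ‖z - ξ‖ = ‖ξ - z‖ := norm_sub_rev z ξ
  have hδsq : δ ^ 2 = s := Real.sq_sqrt hs.le
  have hu2 : u ^ 2 = ‖z - ξ‖ ^ 2 / s := by
    rw [habs, hudef, div_pow, hδsq]
  have hE : Real.exp (-c * ‖z - ξ‖ ^ 2 / s) = Real.exp (-(c * u ^ 2)) := by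
    congr 1
    rw [hu2]
    ring
  have hE' : Real.exp (-(c / 2) * ‖z - ξ‖ ^ 2 / s)
      = Real.exp (-(c / 2 * u ^ 2)) := by
    congr 1
    rw [hu2]
    ring
  set E : ℝ := Real.exp (-(c * u ^ 2)) with hEdef
  set E' : ℝ := Real.exp (-(c / 2 * u ^ 2)) with hE'def
  have hEpos : 0 < E := Real.exp_pos _
  have hE'pos : 0 < E' := Real.exp_pos _
  have hLamz : 0 ≤ Lam p D z δ := by
    refine Finset.sum_nonneg fun j _ => Finset.sum_nonneg fun k _ => ?_
    positivity
  -- main per-term bound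
  have main : ∀ j ∈ Finset.Icc 1 D, ∀ k ∈ Finset.Icc 1 D,
      E * (‖Acoef p j k ξ‖ * δ ^ (j + k))
        ≤ B ^ 2 * K0 * (E' * Lam p D z δ) := by
    intro j hj k hk
    rw [Finset.mem_Icc] at hj hk
    have step1 := Acoef_abs_bound p D a hp j k z ξ
    have habsh : ‖ξ - z‖ = u * δ := by
      rw [hudef]
      field_simp
    calc E * (‖Acoef p j k ξ‖ * δ ^ (j + k))
        ≤ E * ((∑ α' ∈ Finset.Icc j D, ∑ β' ∈ Finset.Icc k D,
            (α'.choose j : ℝ) * (β'.choose k : ℝ) * ‖Acoef p α' β' z‖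
              * ‖ξ - z‖ ^ (α' - j) * ‖ξ - z‖ ^ (β' - k)) * δ ^ (j + k)) := by
          apply mul_le_mul_of_nonneg_left _ hEpos.le
          apply mul_le_mul_of_nonneg_right step1 (by positivity)
      _ = ∑ α' ∈ Finset.Icc j D, ∑ β' ∈ Finset.Icc k D,
            (α'.choose j : ℝ) * (β'.choose k : ℝ) * ‖Acoef p α' β' z‖
              * (‖ξ - z‖ ^ (α' - j) * ‖ξ - z‖ ^ (β' - k)
                  * δ ^ (j + k) * E) := by
          rw [Finset.sum_mul, Finset.mul_sum]
          refine Finset.sum_congr rfl fun α' _ => ?_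
          rw [Finset.sum_mul, Finset.mul_sum]
          refine Finset.sum_congr rfl fun β' _ => ?_
          ring
      _ ≤ ∑ α' ∈ Finset.Icc j D, ∑ β' ∈ Finset.Icc k D,
            B ^ 2 * K0 * E' * (‖Acoef p α' β' z‖ * δ ^ (α' + β')) := by
          refine Finset.sum_le_sum fun α' hα' => Finset.sum_le_sum fun β' hβ' => ?_
          rw [Finset.mem_Icc] at hα' hβ'
          have hr : (α' - j) + (β' - k) ≤ 2 * D := by omega
          have hpow : ‖ξ - z‖ ^ (α' - j) * ‖ξ - z‖ ^ (β' - k)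
              * δ ^ (j + k) * E
              = δ ^ (α' + β') * (u ^ ((α' - j) + (β' - k)) * E) := by
            rw [habsh, mul_pow, mul_pow, pow_add u]
            have : δ ^ (α' - j) * δ ^ (β' - k) * δ ^ (j + k) = δ ^ (α' + β') := by
              rw [← pow_add, ← pow_add]
              congr 1
              omega
            calc u ^ (α' - j) * δ ^ (α' - j) * (u ^ (β' - k) * δ ^ (β' - k)) * δ ^ (j + k) * E
                = (u ^ (α' - j) * u ^ (β' - k)) * (δ ^ (α' - j) * δ ^ (β' - k) * δ ^ (j + k)) * E := by
                  ring
              _ = δ ^ (α' + β') * (u ^ (α' - j) * u ^ (β' - k) * E) := by rw [this]; ring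
          have hue : u ^ ((α' - j) + (β' - k)) * E ≤ K0 * E' := by
            rw [hEdef, hE'def, hK0]
            exact pow_exp_bound D c hc u hu _ hr
          have hcc : (α'.choose j : ℝ) * (β'.choose k : ℝ) ≤ B ^ 2 := by
            have b1 : (α'.choose j : ℝ) ≤ B := by
              rw [hB]
              have := Nat.choose_le_pow α' j
              have h2 : α' ^ j ≤ (D + 1) ^ (D + 1) :=
                le_trans (Nat.pow_le_pow_left (by omega) j)
                  (Nat.pow_le_pow_right (by omega) (by omega))
              exact_mod_cast le_trans this h2
            have b2 : (β'.choose k : ℝ) ≤ B := by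
              rw [hB]
              have := Nat.choose_le_pow β' k
              have h2 : β' ^ k ≤ (D + 1) ^ (D + 1) :=
                le_trans (Nat.pow_le_pow_left (by omega) k)
                  (Nat.pow_le_pow_right (by omega) (by omega))
              exact_mod_cast le_trans this h2
            have := mul_le_mul b1 b2 (Nat.cast_nonneg _) hBpos.le
            calc (α'.choose j : ℝ) * (β'.choose k : ℝ) ≤ B * B := this
              _ = B ^ 2 := by ring
          rw [hpow]
          have hAδ : (0 : ℝ) ≤ ‖Acoef p α' β' z‖ * δ ^ (α' + β') := by positivity
          calc (α'.choose j : ℝ) * (β'.choose k : ℝ) * ‖Acoef p α' β' z‖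
                * (δ ^ (α' + β') * (u ^ ((α' - j) + (β' - k)) * E))
              ≤ (α'.choose j : ℝ) * (β'.choose k : ℝ) * ‖Acoef p α' β' z‖
                * (δ ^ (α' + β') * (K0 * E')) := by
                refine mul_le_mul_of_nonneg_left ?_ (by positivity)
                exact mul_le_mul_of_nonneg_left hue (by positivity)
            _ = ((α'.choose j : ℝ) * (β'.choose k : ℝ))
                * (K0 * E' * (‖Acoef p α' β' z‖ * δ ^ (α' + β'))) := by ring
            _ ≤ B ^ 2 * (K0 * E' * (‖Acoef p α' β' z‖ * δ ^ (α' + β'))) := by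
                refine mul_le_mul_of_nonneg_right hcc (by positivity)
            _ = B ^ 2 * K0 * E' * (‖Acoef p α' β' z‖ * δ ^ (α' + β')) := by ring
      _ = B ^ 2 * K0 * E' * ∑ α' ∈ Finset.Icc j D, ∑ β' ∈ Finset.Icc k D,
            ‖Acoef p α' β' z‖ * δ ^ (α' + β') := by
          rw [Finset.mul_sum]
          refine Finset.sum_congr rfl fun α' _ => ?_
          rw [Finset.mul_sum]
      _ ≤ B ^ 2 * K0 * E' * Lam p D z δ := by
          refine mul_le_mul_of_nonneg_left ?_ (by positivity)
          rw [Lam]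
          have hsub1 : Finset.Icc j D ⊆ Finset.Icc 1 D := by
            apply Finset.Icc_subset_Icc_left
            omega
          have hsub2 : Finset.Icc k D ⊆ Finset.Icc 1 D := by
            apply Finset.Icc_subset_Icc_left
            omega
          calc ∑ α' ∈ Finset.Icc j D, ∑ β' ∈ Finset.Icc k D,
                ‖Acoef p α' β' z‖ * δ ^ (α' + β')
              ≤ ∑ α' ∈ Finset.Icc j D, ∑ β' ∈ Finset.Icc 1 D,
                ‖Acoef p α' β' z‖ * δ ^ (α' + β') := by
                refine Finset.sum_le_sum fun α' _ => ?_
                refine Finset.sum_le_sum_of_subset_of_nonneg hsub2 fun i _ _ => by positivity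
            _ ≤ ∑ α' ∈ Finset.Icc 1 D, ∑ β' ∈ Finset.Icc 1 D,
                ‖Acoef p α' β' z‖ * δ ^ (α' + β') := by
                refine Finset.sum_le_sum_of_subset_of_nonneg hsub1 fun i _ _ => ?_
                refine Finset.sum_nonneg fun k' _ => by positivity
      _ = B ^ 2 * K0 * (E' * Lam p D z δ) := by ring
  -- sum up
  rw [hE, hE']
  have expand : E * Lam p D ξ δ
      = ∑ j ∈ Finset.Icc 1 D, ∑ k ∈ Finset.Icc 1 D,
          E * (‖Acoef p j k ξ‖ * δ ^ (j + k)) := by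
    rw [Lam, Finset.mul_sum]
    refine Finset.sum_congr rfl fun j _ => Finset.mul_sum _ _ _
  rw [expand]
  have card1 : (Finset.Icc 1 D).card = D := by
    rw [Nat.card_Icc]
    omega
  calc ∑ j ∈ Finset.Icc 1 D, ∑ k ∈ Finset.Icc 1 D,
        E * (‖Acoef p j k ξ‖ * δ ^ (j + k))
      ≤ ∑ j ∈ Finset.Icc 1 D, ∑ k ∈ Finset.Icc 1 D,
        B ^ 2 * K0 * (E' * Lam p D z δ) := by
        refine Finset.sum_le_sum fun j hj => Finset.sum_le_sum fun k hk => main j hj k hk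
    _ = (D : ℝ) ^ 2 * B ^ 2 * K0 * (E' * Lam p D z δ) := by
        rw [Finset.sum_const, Finset.sum_const, card1, smul_smul, nsmul_eq_mul]
        push_cast
        ring
    _ ≤ ((D : ℝ) ^ 2 * B ^ 2 * K0 + 1) * (E' * Lam p D z δ) := by
        refine mul_le_mul_of_nonneg_right (by linarith) ?_
        positivity

/-- With a loss in the exponential constant, `Λ(ξ, √s)` may be replaced by `Λ(z, √s)`:
there are `C` and `0 < c' < c`, depending only on `deg p`, `c`, `ℓ`, `m`, so that
`e^{-c|z-ξ|²/s} Λ(ξ, s^{1/2}) ≤ C e^{-c'|z-ξ|²/s} Λ(z, s^{1/2})`. -/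
theorem Lam_replacement (D : ℕ) (c : ℝ) (hc : 0 < c) (ℓ m : ℕ) :
    ∃ C : ℝ, 0 < C ∧ ∃ c' : ℝ, 0 < c' ∧ c' < c ∧
      ∀ p : ℂ → ℂ, IsCCPoly p D → IsRealValued p →
        ∀ s : ℝ, 0 < s → ∀ z ξ : ℂ,
          Real.exp (-c * ‖z - ξ‖ ^ 2 / s) * Lam p D ξ (Real.sqrt s) ≤
            C * (Real.exp (-c' * ‖z - ξ‖ ^ 2 / s) * Lam p D z (Real.sqrt s)) := by
  obtain ⟨C, hC, c', h1, h2, h3⟩ := Lam_replacement_aux D c hc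
  exact ⟨C, hC, c', h1, h2, fun p hp _ => h3 p hp⟩
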